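/- Let (Y, 𝒟, ν) be a probability space, 𝒞 ⊆ 𝒟 a sub-σ-algebra, α a finite measurable partition of Y, and let a group G act on Y by invertible measurable (not necessarily measure-preserving) transformations. For nonempty finite E, F ⊆ G, writing α_S = ⋁_{g∈S} g⁻¹α, one has H_ν(α_F | 𝒞) ≤ ∑_{g∈F} (1/|E|)·H_ν(α_{Eg} | 𝒞) + |F \ {g ∈ G : E⁻¹g ⊆ F}|·log|α|. -/

import Mathlib

open MeasureTheory MeasurableSpace

/-- Conditional Shannon entropy `H_ν(f | m)` of a finite measurable partition of `Y`
(encoded as a map `f : Y → A` into a finite type, the atoms being the fibers),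
given a sub-σ-algebra `m`, with respect to the measure `ν`. -/
noncomputable def condEnt {Y A : Type*} [Fintype A] {m0 : MeasurableSpace Y}
    (ν : Measure Y) (m : MeasurableSpace Y) (f : Y → A) : ℝ :=
  ∑ a : A, ∫ y, Real.negMulLog
    ((MeasureTheory.condExp m ν (Set.indicator (f ⁻¹' {a}) (fun _ => (1 : ℝ)))) y) ∂ν

/-- The join `α_S = ⋁_{g∈S} g⁻¹α` of the pullbacks of the partition `α` under the
elements of the finite set `S ⊆ G`, encoded as a map into `S → A`. -/
def joinMap {G Y A : Type*} [Group G] [MulAction G Y] (α : Y → A) (S : Finset G) :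
    Y → (S → A) := fun y s => α (s.1 • y)

open Finset Real

set_option linter.unusedSectionVars false
namespace Stmt9Aux

/-- Gibbs-type inequality via `log x ≤ x - 1`. -/
lemma gibbs {ι : Type*} (t : Finset ι) (u v : ι → ℝ) (hu : ∀ i ∈ t, 0 ≤ u i)
    (hv : ∀ i ∈ t, 0 ≤ v i) (hpos : ∀ i ∈ t, 0 < u i → 0 < v i)
    (hsum : ∑ i ∈ t, v i ≤ ∑ i ∈ t, u i) :
    ∑ i ∈ t, u i * Real.log (v i / u i) ≤ 0 := by
  classical
  have key : ∀ i ∈ t, u i * Real.log (v i / u i) ≤ (if u i = 0 then 0 else v i - u i) := by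
    intro i hi
    by_cases h : u i = 0
    · simp [h]
    · have hui : 0 < u i := lt_of_le_of_ne (hu i hi) (Ne.symm h)
      have hvi : 0 < v i := hpos i hi hui
      have hd : 0 < v i / u i := div_pos hvi hui
      have := Real.log_le_sub_one_of_pos hd
      simp only [h, if_false]
      calc u i * Real.log (v i / u i) ≤ u i * (v i / u i - 1) := by
            exact mul_le_mul_of_nonneg_left this hui.le
        _ = v i - u i := by field_simp
  calc ∑ i ∈ t, u i * Real.log (v i / u i) ≤ ∑ i ∈ t, (if u i = 0 then 0 else v i - u i) :=
        Finset.sum_le_sum key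
    _ = ∑ i ∈ t.filter (fun i => ¬ u i = 0), (v i - u i) := by
        rw [Finset.sum_filter]
        exact Finset.sum_congr rfl (fun i hi => by by_cases h : u i = 0 <;> simp [h])
    _ = ∑ i ∈ t.filter (fun i => ¬ u i = 0), v i - ∑ i ∈ t.filter (fun i => ¬ u i = 0), u i :=
        Finset.sum_sub_distrib _ _
    _ ≤ ∑ i ∈ t, v i - ∑ i ∈ t, u i := by
        have h1 : ∑ i ∈ t.filter (fun i => ¬ u i = 0), u i = ∑ i ∈ t, u i := by
          simpa using Finset.sum_filter_ne_zero t (f := u)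
        have h2 : ∑ i ∈ t.filter (fun i => ¬ u i = 0), v i ≤ ∑ i ∈ t, v i :=
          Finset.sum_le_sum_of_subset_of_nonneg (Finset.filter_subset _ _)
            (fun i hi _ => hv i hi)
        linarith
    _ ≤ 0 := by linarith



lemma negMulLog_sum_le {ι : Type*} (t : Finset ι) (q : ι → ℝ) (hq : ∀ i ∈ t, 0 ≤ q i) :
    negMulLog (∑ i ∈ t, q i) ≤ ∑ i ∈ t, negMulLog (q i) := by
  set S := ∑ i ∈ t, q i with hS
  have hS0 : 0 ≤ S := Finset.sum_nonneg hq
  have key : ∀ i ∈ t, -(q i * Real.log S) ≤ negMulLog (q i) := by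
    intro i hi
    by_cases h : q i = 0
    · simp [h]
    · have hqi : 0 < q i := lt_of_le_of_ne (hq i hi) (Ne.symm h)
      have hle : q i ≤ S := Finset.single_le_sum hq hi
      have : Real.log (q i) ≤ Real.log S := Real.log_le_log hqi hle
      simp only [negMulLog, neg_mul]
      nlinarith
  calc negMulLog S = -(S * Real.log S) := by simp [negMulLog]
    _ = ∑ i ∈ t, -(q i * Real.log S) := by
        rw [eq_comm, Finset.sum_neg_distrib, ← Finset.sum_mul, ← hS]
    _ ≤ ∑ i ∈ t, negMulLog (q i) := Finset.sum_le_sum key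


/-- coarse-graining decreases pointwise entropy -/
lemma recode_le {A B : Type*} [Fintype A] [Fintype B] [DecidableEq B]
    (q : A → ℝ) (hq : ∀ a, 0 ≤ q a) (φ : A → B) :
    ∑ b, negMulLog (∑ a, if φ a = b then q a else 0) ≤ ∑ a, negMulLog (q a) := by
  classical
  have : ∑ a, negMulLog (q a)
      = ∑ b, ∑ a ∈ Finset.univ.filter (fun a => φ a = b), negMulLog (q a) :=
    (Finset.sum_fiberwise Finset.univ φ (fun a => negMulLog (q a))).symm
  rw [this]
  refine Finset.sum_le_sum (fun b _ => ?_)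
  rw [← Finset.sum_filter]
  exact negMulLog_sum_le _ _ (fun a _ => hq a)

/-- Jensen: entropy of a probability vector is at most `log card`. -/
lemma ent_le_log {A : Type*} [Fintype A] [Nonempty A] (q : A → ℝ)
    (hq : ∀ a, 0 ≤ q a) (hsum : ∑ a, q a = 1) :
    ∑ a, negMulLog (q a) ≤ Real.log (Fintype.card A) := by
  classical
  set n : ℝ := (Fintype.card A : ℝ) with hn
  have hn0 : 0 < n := by
    have := Fintype.card_pos (α := A)
    positivity
  have jensen : ∑ a, (n⁻¹ : ℝ) • negMulLog (n * q a) ≤ negMulLog (∑ a, (n⁻¹ : ℝ) • (n * q a)) := by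
    refine ConcaveOn.le_map_sum concaveOn_negMulLog (fun _ _ => by positivity) ?_ ?_
    · simp only [Finset.sum_const, Finset.card_univ, nsmul_eq_mul, hn]
      field_simp
    · intro a _
      have := hq a
      simp only [Set.mem_Ici]
      positivity
  have h1 : ∑ a, (n⁻¹ : ℝ) • (n * q a) = 1 := by
    simp only [smul_eq_mul, ← mul_assoc, inv_mul_cancel₀ hn0.ne']
    simpa using hsum
  rw [h1] at jensen
  simp only [negMulLog_one] at jensen
  have h2 : ∀ a : A, (n⁻¹ : ℝ) • negMulLog (n * q a)
      = n⁻¹ * (q a * negMulLog n) + negMulLog (q a) := by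
    intro a
    rw [negMulLog_mul]
    rw [smul_eq_mul]
    ring_nf
    rw [mul_inv_cancel₀ hn0.ne']
    ring
  simp only [h2, Finset.sum_add_distrib, ← Finset.mul_sum] at jensen
  have h3 : ∑ a, q a * negMulLog n = negMulLog n := by
    rw [← Finset.sum_mul, hsum, one_mul]
  rw [h3] at jensen
  have h4 : n⁻¹ * negMulLog n = - Real.log n := by
    simp [negMulLog]
    field_simp
  rw [h4] at jensen
  linarith

lemma abs_negMulLog_le_one {x : ℝ} (h0 : 0 ≤ x) (h1 : x ≤ 1) : |negMulLog x| ≤ 1 := by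
  rw [abs_of_nonneg (negMulLog_nonneg h0 h1)]
  rcases eq_or_lt_of_le h0 with h | h
  · simp [← h]
  · have hinv : 0 < x⁻¹ := by positivity
    have := Real.log_le_sub_one_of_pos hinv
    rw [Real.log_inv] at this
    have : -Real.log x ≤ x⁻¹ - 1 := this
    have hx : x * (-Real.log x) ≤ x * (x⁻¹ - 1) := by
      exact mul_le_mul_of_nonneg_left this h0
    have : x * (x⁻¹ - 1) = 1 - x := by field_simp
    simp only [negMulLog, neg_mul]
    nlinarith


/-- pointwise strong subadditivity (submodularity) of Shannon entropy. -/
lemma ssa {A C B : Type*} [Fintype A] [Fintype C] [Fintype B] [DecidableEq B]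
    (q : A → C → ℝ) (hq : ∀ a c, 0 ≤ q a c) (φ : C → B) :
    (∑ a, ∑ c, negMulLog (q a c))
        + ∑ b, negMulLog (∑ c, if φ c = b then (∑ a, q a c) else 0)
      ≤ (∑ a, ∑ b, negMulLog (∑ c, if φ c = b then q a c else 0))
        + ∑ c, negMulLog (∑ a, q a c) := by
  classical
  set s : C → ℝ := fun c => ∑ a, q a c with hs_def
  set R : A → B → ℝ := fun a b => ∑ c, if φ c = b then q a c else 0 with hR_def
  set Q : B → ℝ := fun b => ∑ c, if φ c = b then s c else 0 with hQ_def
  have hs : ∀ c, 0 ≤ s c := fun c => Finset.sum_nonneg (fun a _ => hq a c)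
  have hR : ∀ a b, 0 ≤ R a b := fun a b => Finset.sum_nonneg (fun c _ => by
    split <;> simp [hq])
  have hQ : ∀ b, 0 ≤ Q b := fun b => Finset.sum_nonneg (fun c _ => by
    split <;> simp [hs])
  have hsQ : ∀ c, s c ≤ Q (φ c) := by
    intro c
    have := Finset.single_le_sum (f := fun c' => if φ c' = φ c then s c' else 0)
      (fun c' _ => by split <;> simp [hs]) (Finset.mem_univ c)
    simpa using this
  have hqR : ∀ a c, q a c ≤ R a (φ c) := by
    intro a c
    have := Finset.single_le_sum (f := fun c' => if φ c' = φ c then q a c' else 0)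
      (fun c' _ => by split <;> simp [hq]) (Finset.mem_univ c)
    simpa using this
  have hqs : ∀ a c, q a c ≤ s c := fun a c =>
    Finset.single_le_sum (fun a' _ => hq a' c) (Finset.mem_univ a)
  have hRQ : ∀ b, ∑ a, R a b = Q b := by
    intro b
    rw [hQ_def, hR_def]
    simp only
    rw [Finset.sum_comm]
    refine Finset.sum_congr rfl (fun c _ => ?_)
    split <;> simp [hs_def]
  -- rewrite the four entropy sums as sums over a, c
  have E1 : ∑ b, negMulLog (Q b) = ∑ c, -(s c * Real.log (Q (φ c))) := by
    rw [← Finset.sum_fiberwise Finset.univ φ (fun c => -(s c * Real.log (Q (φ c))))]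
    refine Finset.sum_congr rfl (fun b _ => ?_)
    have : ∀ c ∈ Finset.univ.filter (fun c => φ c = b),
        -(s c * Real.log (Q (φ c))) = -(s c * Real.log (Q b)) := by
      intro c hc
      rw [(Finset.mem_filter.1 hc).2]
    rw [Finset.sum_congr rfl this, eq_comm, Finset.sum_neg_distrib, ← Finset.sum_mul,
      Finset.sum_filter]
    simp [negMulLog, hQ_def]
  have E2 : ∀ a, ∑ b, negMulLog (R a b) = ∑ c, -(q a c * Real.log (R a (φ c))) := by
    intro a
    rw [← Finset.sum_fiberwise Finset.univ φ (fun c => -(q a c * Real.log (R a (φ c))))]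
    refine Finset.sum_congr rfl (fun b _ => ?_)
    have : ∀ c ∈ Finset.univ.filter (fun c => φ c = b),
        -(q a c * Real.log (R a (φ c))) = -(q a c * Real.log (R a b)) := by
      intro c hc
      rw [(Finset.mem_filter.1 hc).2]
    rw [Finset.sum_congr rfl this, eq_comm, Finset.sum_neg_distrib, ← Finset.sum_mul,
      Finset.sum_filter]
    simp [negMulLog, hR_def]
  have E3 : ∀ c, negMulLog (s c) = ∑ a, -(q a c * Real.log (s c)) := by
    intro c
    rw [eq_comm, Finset.sum_neg_distrib, ← Finset.sum_mul]
    simp [negMulLog, hs_def]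
  -- reduce to gibbs
  have key : ∑ a, ∑ c, (q a c * Real.log ((s c * R a (φ c) / Q (φ c)) / q a c)) ≤ 0 := by
    have := gibbs (ι := A × C) Finset.univ (fun p => q p.1 p.2)
      (fun p => s p.2 * R p.1 (φ p.2) / Q (φ p.2))
      (fun p _ => hq p.1 p.2)
      (fun p _ => by
        have := hs p.2; have := hR p.1 (φ p.2); have := hQ (φ p.2); positivity)
      (fun p _ hp => by
        have h1 : 0 < s p.2 := lt_of_lt_of_le hp (hqs p.1 p.2)
        have h2 : 0 < R p.1 (φ p.2) := lt_of_lt_of_le hp (hqR p.1 p.2)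
        have h3 : 0 < Q (φ p.2) := lt_of_lt_of_le h1 (hsQ p.2)
        positivity)
      (by
        rw [Fintype.sum_prod_type_right]
        have hv : ∀ c : C, ∑ a : A, s c * R a (φ c) / Q (φ c) ≤ s c := by
          intro c
          rw [← Finset.sum_div, ← Finset.mul_sum, hRQ]
          by_cases h : Q (φ c) = 0
          · rw [h]
            simp [hs]
          · rw [mul_div_assoc, div_self h, mul_one]
        calc ∑ c : C, ∑ a : A, s c * R a (φ c) / Q (φ c) ≤ ∑ c : C, s c :=
              Finset.sum_le_sum (fun c _ => hv c)
          _ = ∑ c : C, ∑ a : A, q a c := rfl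
          _ = ∑ p : A × C, q p.1 p.2 := by rw [Fintype.sum_prod_type_right])
    rw [Fintype.sum_prod_type] at this
    exact this
  -- final algebra
  have term_eq : ∀ a c,
      q a c * Real.log ((s c * R a (φ c) / Q (φ c)) / q a c)
        = negMulLog (q a c) + -(q a c * Real.log (Q (φ c)))
          - (-(q a c * Real.log (R a (φ c)))) - (-(q a c * Real.log (s c))) := by
    intro a c
    by_cases h : q a c = 0
    · simp [h, negMulLog]
    · have hqpos : 0 < q a c := lt_of_le_of_ne (hq a c) (Ne.symm h)
      have h1 : 0 < s c := lt_of_lt_of_le hqpos (hqs a c)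
      have h2 : 0 < R a (φ c) := lt_of_lt_of_le hqpos (hqR a c)
      have h3 : 0 < Q (φ c) := lt_of_lt_of_le h1 (hsQ c)
      rw [Real.log_div (by positivity) h, Real.log_div (by positivity) h3.ne',
        Real.log_mul h1.ne' h2.ne']
      simp only [negMulLog, neg_mul]
      ring
  calc (∑ a, ∑ c, negMulLog (q a c))
        + ∑ b, negMulLog (∑ c, if φ c = b then (∑ a, q a c) else 0)
      = (∑ a, ∑ c, negMulLog (q a c)) + ∑ c, ∑ a, -(q a c * Real.log (Q (φ c))) := by
        congr 1
        have h0 : ∑ b, negMulLog (∑ c, if φ c = b then (∑ a, q a c) else 0)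
            = ∑ b, negMulLog (Q b) := rfl
        rw [h0, E1]
        refine Finset.sum_congr rfl (fun c _ => ?_)
        rw [eq_comm, Finset.sum_neg_distrib, ← Finset.sum_mul]
    _ = (∑ a, ∑ c, (q a c * Real.log ((s c * R a (φ c) / Q (φ c)) / q a c)))
          + ((∑ a, ∑ c, -(q a c * Real.log (R a (φ c))))
            + ∑ c, ∑ a, -(q a c * Real.log (s c))) := by
        rw [Finset.sum_comm (f := fun c a => -(q a c * Real.log (Q (φ c))))]
        simp only [term_eq]
        rw [Finset.sum_comm (f := fun c a => -(q a c * Real.log (s c)))]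
        simp only [Finset.sum_add_distrib, Finset.sum_sub_distrib]
        ring
    _ ≤ 0 + ((∑ a, ∑ c, -(q a c * Real.log (R a (φ c))))
            + ∑ c, ∑ a, -(q a c * Real.log (s c))) := by
        exact add_le_add_left key _
    _ = (∑ a, ∑ b, negMulLog (R a b)) + ∑ c, negMulLog (s c) := by
        rw [zero_add]
        congr 1
        · exact Finset.sum_congr rfl (fun a _ => (E2 a).symm)
        · exact Finset.sum_congr rfl (fun c _ => (E3 c).symm)


section Meas

variable {Y : Type*} {m : MeasurableSpace Y} [mY : MeasurableSpace Y]
  {ν : Measure Y} [IsProbabilityMeasure ν]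

/-- the indicator of a fiber -/
noncomputable def ind {A : Type*} (f : Y → A) (a : A) : Y → ℝ :=
  Set.indicator (f ⁻¹' {a}) (fun _ => (1 : ℝ))

lemma ind_apply {A : Type*} [DecidableEq A] (f : Y → A) (a : A) (y : Y) :
    ind f a y = if f y = a then 1 else 0 := by
  classical
  rw [ind, Set.indicator_apply]
  congr 1

lemma ind_nonneg {A : Type*} (f : Y → A) (a : A) (y : Y) : 0 ≤ ind f a y := by
  classical
  rw [ind_apply]; split <;> norm_num

lemma ind_le_one {A : Type*} (f : Y → A) (a : A) (y : Y) : ind f a y ≤ 1 := by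
  classical
  rw [ind_apply]; split <;> norm_num

lemma ind_integrable {A : Type*} {f : Y → A} {a : A}
    (hf : MeasurableSet (f ⁻¹' {a})) : Integrable (ind f a) ν :=
  (integrable_const (1 : ℝ)).indicator hf

lemma sum_ind {A : Type*} [Fintype A] (f : Y → A) :
    ∑ a : A, ind f a = fun _ => (1 : ℝ) := by
  classical
  funext y
  rw [Finset.sum_apply]
  simp only [ind_apply]
  simp

/-- the conditional probability of a fiber -/
noncomputable def cp (m : MeasurableSpace Y) (ν : @Measure Y mY) {A : Type*} (f : Y → A)
    (a : A) : Y → ℝ :=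
  MeasureTheory.condExp m ν (ind f a)

lemma cp_nonneg {A : Type*} (f : Y → A) (a : A) : 0 ≤ᵐ[ν] cp m ν f a :=
  condExp_nonneg (ae_of_all _ (ind_nonneg f a))

lemma cp_le_one (hm : m ≤ mY) {A : Type*} {f : Y → A} {a : A}
    (hf : MeasurableSet (f ⁻¹' {a})) : cp m ν f a ≤ᵐ[ν] fun _ => (1 : ℝ) := by
  have h := condExp_mono (m := m) (μ := ν) (ind_integrable hf)
    (integrable_const (1 : ℝ)) (ae_of_all _ (ind_le_one f a))
  rwa [condExp_const (μ := ν) hm (1:ℝ)] at h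

lemma cp_sum (hm : m ≤ mY) {A : Type*} [Fintype A] {f : Y → A}
    (hf : ∀ a, MeasurableSet (f ⁻¹' {a})) :
    ∀ᵐ y ∂ν, ∑ a : A, cp m ν f a y = 1 := by
  have h1 : MeasureTheory.condExp m ν (∑ a : A, ind f a)
      =ᵐ[ν] ∑ a : A, cp m ν f a :=
    condExp_finset_sum (fun a _ => ind_integrable (hf a)) m
  rw [sum_ind f] at h1
  have h2 : MeasureTheory.condExp m ν (fun _ => (1:ℝ)) = fun _ => (1:ℝ) :=
    condExp_const (μ := ν) hm (1:ℝ)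
  rw [h2] at h1
  filter_upwards [h1] with y hy
  rw [← Finset.sum_apply y Finset.univ (fun a => cp m ν f a), ← hy]

lemma cp_aestronglyMeasurable (hm : m ≤ mY) {A : Type*} (f : Y → A) (a : A) :
    AEStronglyMeasurable (cp m ν f a) ν :=
  ((stronglyMeasurable_condExp (μ := ν) (f := ind f a) (m := m)).mono hm).aestronglyMeasurable

lemma nml_cp_integrable (hm : m ≤ mY) {A : Type*} {f : Y → A} {a : A}
    (hf : MeasurableSet (f ⁻¹' {a})) :
    Integrable (fun y => negMulLog (cp m ν f a y)) ν := by
  refine Integrable.mono' (integrable_const (1 : ℝ))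
    (continuous_negMulLog.comp_aestronglyMeasurable (cp_aestronglyMeasurable hm f a)) ?_
  filter_upwards [cp_nonneg (m := m) (ν := ν) f a, cp_le_one hm hf] with y h0 h1
  exact abs_negMulLog_le_one h0 h1

/-- the marginal identity for conditional probabilities -/
lemma cp_marginal (hm : m ≤ mY) {D B : Type*} [Fintype D] [DecidableEq B]
    {f : Y → D} (hf : ∀ d, MeasurableSet (f ⁻¹' {d})) (ψ : D → B) (b : B) :
    cp m ν (ψ ∘ f) b =ᵐ[ν] fun y => ∑ d : D, if ψ d = b then cp m ν f d y else 0 := by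
  classical
  have hid : ind (ψ ∘ f) b = ∑ d ∈ Finset.univ.filter (fun d => ψ d = b), ind f d := by
    funext y
    rw [Finset.sum_apply]
    simp only [ind_apply, Function.comp_apply]
    rw [Finset.sum_ite_eq (Finset.univ.filter (fun d => ψ d = b)) (f y) (fun _ => (1:ℝ))]
    simp
  have h1 : cp m ν (ψ ∘ f) b
      =ᵐ[ν] ∑ d ∈ Finset.univ.filter (fun d => ψ d = b), cp m ν f d := by
    rw [cp, hid]
    exact condExp_finset_sum (fun d _ => ind_integrable (hf d)) m
  filter_upwards [h1] with y hy
  rw [hy, Finset.sum_apply y _ (fun d => cp m ν f d), Finset.sum_filter]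

lemma condEnt_eq_integral (hm : m ≤ mY) {A : Type*} [Fintype A] {f : Y → A}
    (hf : ∀ a, MeasurableSet (f ⁻¹' {a})) :
    condEnt ν m f = ∫ y, ∑ a : A, negMulLog (cp m ν f a y) ∂ν := by
  rw [condEnt]
  exact (integral_finset_sum _ (fun a _ => nml_cp_integrable hm (hf a))).symm

lemma integrable_ent_sum (hm : m ≤ mY) {A : Type*} [Fintype A] {f : Y → A}
    (hf : ∀ a, MeasurableSet (f ⁻¹' {a})) :
    Integrable (fun y => ∑ a : A, negMulLog (cp m ν f a y)) ν :=
  integrable_finset_sum _ (fun a _ => nml_cp_integrable hm (hf a))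

lemma condEnt_nonneg (hm : m ≤ mY) {A : Type*} [Fintype A] {f : Y → A}
    (hf : ∀ a, MeasurableSet (f ⁻¹' {a})) : 0 ≤ condEnt ν m f := by
  rw [condEnt]
  refine Finset.sum_nonneg (fun a _ => ?_)
  refine integral_nonneg_of_ae ?_
  filter_upwards [cp_nonneg (ν := ν) (m := m) f a, cp_le_one hm (hf a)] with y h0 h1
  exact negMulLog_nonneg h0 h1

lemma condEnt_le_log (hm : m ≤ mY) {A : Type*} [Fintype A] [Nonempty A] {f : Y → A}
    (hf : ∀ a, MeasurableSet (f ⁻¹' {a})) :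
    condEnt ν m f ≤ Real.log (Fintype.card A) := by
  rw [condEnt_eq_integral hm hf]
  have : ∫ y, Real.log (Fintype.card A) ∂ν = Real.log (Fintype.card A) := by
    simp
  rw [← this]
  refine integral_mono_ae (integrable_ent_sum hm hf) (integrable_const _) ?_
  have hall : ∀ᵐ y ∂ν, ∀ a, 0 ≤ cp m ν f a y := by
    rw [ae_all_iff]; exact fun a => cp_nonneg (m := m) (ν := ν) f a
  filter_upwards [hall, cp_sum hm hf] with y h0 h1
  exact ent_le_log _ (fun a => h0 a) h1

lemma condEnt_subsingleton (hm : m ≤ mY) {U : Type*} [Fintype U] [Subsingleton U]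
    (g : Y → U) : condEnt ν m g = 0 := by
  rw [condEnt]
  refine Finset.sum_eq_zero (fun u _ => ?_)
  have hfib : g ⁻¹' {u} = Set.univ := by
    ext y
    simp [Subsingleton.elim (g y) u]
  have : Set.indicator (g ⁻¹' {u}) (fun _ => (1:ℝ)) = fun _ => (1:ℝ) := by
    rw [hfib]; simp
  rw [this, condExp_const (μ := ν) hm (1:ℝ)]
  simp


lemma measurableSet_preimage_of_fibers {A : Type*} [Fintype A] {f : Y → A}
    (hf : ∀ a, MeasurableSet (f ⁻¹' {a})) (S : Set A) : MeasurableSet (f ⁻¹' S) := by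
  classical
  have : f ⁻¹' S = ⋃ (a : A) (_ : a ∈ S), f ⁻¹' {a} := by
    ext y; simp
  rw [this]
  exact MeasurableSet.iUnion (fun a => MeasurableSet.iUnion (fun _ => hf a))

/-- coarse graining decreases conditional entropy -/
lemma condEnt_comp_le (hm : m ≤ mY) {A B : Type*} [Fintype A] [Fintype B] {f : Y → A}
    (hf : ∀ a, MeasurableSet (f ⁻¹' {a})) (φ : A → B) :
    condEnt ν m (φ ∘ f) ≤ condEnt ν m f := by
  classical
  have hφf : ∀ b, MeasurableSet ((φ ∘ f) ⁻¹' {b}) := fun b =>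
    measurableSet_preimage_of_fibers hf (φ ⁻¹' {b})
  rw [condEnt_eq_integral hm hφf, condEnt_eq_integral hm hf]
  refine integral_mono_ae (integrable_ent_sum hm hφf) (integrable_ent_sum hm hf) ?_
  have hmarg : ∀ᵐ y ∂ν, ∀ b, cp m ν (φ ∘ f) b y
      = ∑ a, if φ a = b then cp m ν f a y else 0 := by
    rw [ae_all_iff]; exact fun b => cp_marginal hm hf φ b
  have h0 : ∀ᵐ y ∂ν, ∀ a, 0 ≤ cp m ν f a y := by
    rw [ae_all_iff]; exact fun a => cp_nonneg (m := m) (ν := ν) f a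
  filter_upwards [hmarg, h0] with y h1 h2
  calc ∑ b, negMulLog (cp m ν (φ ∘ f) b y)
      = ∑ b, negMulLog (∑ a, if φ a = b then cp m ν f a y else 0) :=
        Finset.sum_congr rfl (fun b _ => by rw [h1 b])
    _ ≤ ∑ a, negMulLog (cp m ν f a y) := recode_le _ h2 φ

/-- strong subadditivity for conditional entropy -/
lemma condEnt_ssa (hm : m ≤ mY) {A C B : Type*} [Fintype A] [Fintype C] [Fintype B]
    {f : Y → A} {h : Y → C} (hf : ∀ a, MeasurableSet (f ⁻¹' {a}))
    (hh : ∀ c, MeasurableSet (h ⁻¹' {c})) (φ : C → B) :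
    condEnt ν m (fun y => (f y, h y)) + condEnt ν m (φ ∘ h)
      ≤ condEnt ν m (fun y => (f y, φ (h y))) + condEnt ν m h := by
  classical
  set P : Y → A × C := fun y => (f y, h y) with hP_def
  have hP : ∀ p : A × C, MeasurableSet (P ⁻¹' {p}) := by
    rintro ⟨a, c⟩
    have : P ⁻¹' {(a, c)} = (f ⁻¹' {a}) ∩ (h ⁻¹' {c}) := by
      ext y; simp [hP_def, Prod.ext_iff]
    rw [this]; exact (hf a).inter (hh c)
  have hφh : ∀ b, MeasurableSet ((φ ∘ h) ⁻¹' {b}) := fun b =>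
    measurableSet_preimage_of_fibers hh (φ ⁻¹' {b})
  have hPφ : ∀ p : A × B, MeasurableSet ((fun y => (f y, φ (h y))) ⁻¹' {p}) := fun p =>
    measurableSet_preimage_of_fibers hP ((Prod.map id φ) ⁻¹' {p})
  rw [condEnt_eq_integral hm hP, condEnt_eq_integral hm hφh,
    condEnt_eq_integral hm hPφ, condEnt_eq_integral hm hh,
    ← integral_add (integrable_ent_sum hm hP) (integrable_ent_sum hm hφh),
    ← integral_add (integrable_ent_sum hm hPφ) (integrable_ent_sum hm hh)]
  refine integral_mono_ae
    ((integrable_ent_sum hm hP).add (integrable_ent_sum hm hφh))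
    ((integrable_ent_sum hm hPφ).add (integrable_ent_sum hm hh)) ?_
  -- marginal identities
  have hmarg1 : ∀ᵐ y ∂ν, ∀ c, cp m ν h c y = ∑ a, cp m ν P (a, c) y := by
    rw [ae_all_iff]
    intro c
    have h1 := cp_marginal (ν := ν) hm hP Prod.snd c
    have h2 : cp m ν h c =ᵐ[ν] cp m ν (Prod.snd ∘ P) c := by rfl
    filter_upwards [h1, h2] with y hy1 hy2
    rw [hy2, hy1, Fintype.sum_prod_type]
    refine Finset.sum_congr rfl (fun a _ => ?_)
    simp
  have hmarg2 : ∀ᵐ y ∂ν, ∀ b, cp m ν (φ ∘ h) b y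
      = ∑ c, if φ c = b then (∑ a, cp m ν P (a, c) y) else 0 := by
    rw [ae_all_iff]
    intro b
    have h1 := cp_marginal (ν := ν) hm hP (fun p => φ p.2) b
    have h2 : cp m ν (φ ∘ h) b =ᵐ[ν] cp m ν ((fun p : A × C => φ p.2) ∘ P) b := by rfl
    filter_upwards [h1, h2] with y hy1 hy2
    rw [hy2, hy1, Fintype.sum_prod_type, Finset.sum_comm]
    refine Finset.sum_congr rfl (fun c _ => ?_)
    split <;> simp
  have hmarg3 : ∀ᵐ y ∂ν, ∀ (p : A × B), cp m ν (fun y => (f y, φ (h y))) p y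
      = ∑ c, if φ c = p.2 then cp m ν P (p.1, c) y else 0 := by
    rw [ae_all_iff]
    rintro ⟨a, b⟩
    have h1 := cp_marginal (ν := ν) hm hP (Prod.map id φ) (a, b)
    have h2 : cp m ν (fun y => (f y, φ (h y))) (a, b)
        =ᵐ[ν] cp m ν ((Prod.map id φ) ∘ P) (a, b) := by rfl
    filter_upwards [h1, h2] with y hy1 hy2
    rw [hy2, hy1, Fintype.sum_prod_type]
    have : ∀ a' : A, ∑ c, (if Prod.map id φ (a', c) = (a, b) then cp m ν P (a', c) y else 0)
        = if a' = a then (∑ c, if φ c = b then cp m ν P (a', c) y else 0) else 0 := by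
      intro a'
      by_cases ha : a' = a
      · subst ha
        simp [Prod.ext_iff]
      · simp [Prod.ext_iff, ha]
    rw [Finset.sum_congr rfl (fun a' _ => this a')]
    rw [Finset.sum_ite_eq' Finset.univ a
      (fun a' => ∑ c, if φ c = b then cp m ν P (a', c) y else 0)]
    simp
  have h0 : ∀ᵐ y ∂ν, ∀ p : A × C, 0 ≤ cp m ν P p y := by
    rw [ae_all_iff]; exact fun p => cp_nonneg (m := m) (ν := ν) P p
  filter_upwards [hmarg1, hmarg2, hmarg3, h0] with y h1 h2 h3 h4
  have main := ssa (fun a c => cp m ν P (a, c) y) (fun a c => h4 (a, c)) φ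
  calc (∑ p : A × C, negMulLog (cp m ν P p y)) + ∑ b, negMulLog (cp m ν (φ ∘ h) b y)
      = (∑ a, ∑ c, negMulLog (cp m ν P (a, c) y))
          + ∑ b, negMulLog (∑ c, if φ c = b then (∑ a, cp m ν P (a, c) y) else 0) := by
        rw [Fintype.sum_prod_type]
        congr 1
        exact Finset.sum_congr rfl (fun b _ => by rw [h2 b])
    _ ≤ (∑ a, ∑ b, negMulLog (∑ c, if φ c = b then cp m ν P (a, c) y else 0))
          + ∑ c, negMulLog (∑ a, cp m ν P (a, c) y) := main
    _ = (∑ p : A × B, negMulLog (cp m ν (fun y => (f y, φ (h y))) p y))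
          + ∑ c, negMulLog (cp m ν h c y) := by
        congr 1
        · rw [Fintype.sum_prod_type]
          exact Finset.sum_congr rfl (fun a _ => Finset.sum_congr rfl (fun b _ => by
            rw [h3 (a, b)]))
        · exact Finset.sum_congr rfl (fun c _ => by rw [h1 c])

end Meas

section Join

variable {Y : Type*} {m : MeasurableSpace Y} [mY : MeasurableSpace Y]
  {ν : Measure Y} [IsProbabilityMeasure ν]
variable {ι A : Type*} [Fintype A] [DecidableEq ι]

/-- the join of the partitions indexed by a finite set -/
def jn (f : ι → Y → A) (S : Finset ι) : Y → (S → A) := fun y s => f s.1 y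

lemma jn_fibers (f : ι → Y → A) (hf : ∀ i a, MeasurableSet (f i ⁻¹' {a})) (S : Finset ι) :
    ∀ g : S → A, MeasurableSet (jn f S ⁻¹' {g}) := by
  intro g
  have : jn f S ⁻¹' {g} = ⋂ (s : {x // x ∈ S}), f s.1 ⁻¹' {g s} := by
    ext y
    simp [jn, funext_iff]
  rw [this]
  exact MeasurableSet.iInter (fun s => hf s.1 (g s))

variable (hm : m ≤ mY) (f : ι → Y → A) (hf : ∀ i a, MeasurableSet (f i ⁻¹' {a}))

include hm hf

lemma HH_mono {S T : Finset ι} (hST : S ⊆ T) :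
    condEnt ν m (jn f S) ≤ condEnt ν m (jn f T) := by
  have he : jn f S = (fun (g : T → A) (s : S) => g ⟨s.1, hST s.2⟩) ∘ jn f T := rfl
  rw [he]
  exact condEnt_comp_le hm (jn_fibers f hf T) _

lemma HH_nonneg (S : Finset ι) : 0 ≤ condEnt ν m (jn f S) :=
  condEnt_nonneg hm (jn_fibers f hf S)

omit hf in
lemma HH_empty : condEnt ν m (jn f (∅ : Finset ι)) = 0 := by
  haveI : IsEmpty ((∅ : Finset ι) : Finset ι) := by
    exact Finset.isEmpty_coe_sort.2 rfl
  exact condEnt_subsingleton hm _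

lemma pair_fibers (i : ι) (S : Finset ι) :
    ∀ p : A × (S → A), MeasurableSet ((fun y => (f i y, jn f S y)) ⁻¹' {p}) := by
  rintro ⟨a, g⟩
  have : (fun y => (f i y, jn f S y)) ⁻¹' {(a, g)} = (f i ⁻¹' {a}) ∩ (jn f S ⁻¹' {g}) := by
    ext y
    simp [Prod.ext_iff]
  rw [this]
  exact (hf i a).inter (jn_fibers f hf S g)

lemma condEnt_jn_insert {i : ι} {S : Finset ι} (hi : i ∉ S) :
    condEnt ν m (jn f (insert i S)) = condEnt ν m (fun y => (f i y, jn f S y)) := by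
  apply le_antisymm
  · have he : jn f (insert i S) = (fun p : A × (S → A) =>
        fun s : (insert i S : Finset ι) =>
          if hs : s.1 = i then p.1 else p.2 ⟨s.1, by
            rcases Finset.mem_insert.1 s.2 with h | h
            · exact absurd h hs
            · exact h⟩) ∘ (fun y => (f i y, jn f S y)) := by
      funext y
      funext s
      by_cases hs : (s : ι) = i
      · simp only [Function.comp_apply, hs, dif_pos]
        show f (s : ι) y = f i y
        rw [hs]
      · simp only [Function.comp_apply, hs, dif_neg]
        rfl
    rw [he]
    exact condEnt_comp_le hm (pair_fibers hm f hf i S) _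
  · have he : (fun y => (f i y, jn f S y)) = (fun g : {x // x ∈ insert i S} → A =>
        (g ⟨i, Finset.mem_insert_self i S⟩,
          fun s : S => g ⟨s.1, Finset.mem_insert_of_mem s.2⟩)) ∘ jn f (insert i S) := rfl
    rw [he]
    exact condEnt_comp_le hm (jn_fibers f hf (insert i S)) _

lemma HH_submod {i : ι} {S T : Finset ι} (hTS : T ⊆ S) (hiS : i ∉ S) :
    condEnt ν m (jn f (insert i S)) + condEnt ν m (jn f T)
      ≤ condEnt ν m (jn f (insert i T)) + condEnt ν m (jn f S) := by
  have hiT : i ∉ T := fun hh => hiS (hTS hh)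
  rw [condEnt_jn_insert hm f hf hiS, condEnt_jn_insert hm f hf hiT]
  exact condEnt_ssa hm (fun a => hf i a) (jn_fibers f hf S)
    (fun (g : S → A) (t : T) => g ⟨t.1, hTS t.2⟩)

lemma HH_single_le [Nonempty A] (i : ι) :
    condEnt ν m (jn f (insert i (∅ : Finset ι))) ≤ Real.log (Fintype.card A) := by
  have he : jn f (insert i (∅ : Finset ι))
      = (fun (a : A) (_ : (insert i (∅ : Finset ι) : Finset ι)) => a) ∘ (f i) := by
    funext y
    funext s
    have hs : (s : ι) = i := by
      rcases Finset.mem_insert.1 s.2 with h | h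
      · exact h
      · exact absurd h (Finset.notMem_empty _)
    show f (s : ι) y = f i y
    rw [hs]
  rw [he]
  exact le_trans (condEnt_comp_le hm (fun a => hf i a) _)
    (condEnt_le_log hm (fun a => hf i a))

lemma HH_insert_le [Nonempty A] (i : ι) (S : Finset ι) :
    condEnt ν m (jn f (insert i S))
      ≤ condEnt ν m (jn f S) + Real.log (Fintype.card A) := by
  have hlog : 0 ≤ Real.log (Fintype.card A) := by
    refine Real.log_nonneg ?_
    exact_mod_cast Fintype.card_pos
  by_cases hi : i ∈ S
  · rw [Finset.insert_eq_self.2 hi]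
    linarith
  · have sub := HH_submod (ν := ν) hm f hf (Finset.empty_subset S) hi
    have h0 := HH_empty (ν := ν) hm f
    have h1 := HH_single_le (ν := ν) hm f hf i
    linarith

lemma HH_union_le [Nonempty A] (T V : Finset ι) :
    condEnt ν m (jn f (T ∪ V))
      ≤ condEnt ν m (jn f T) + (V.card : ℝ) * Real.log (Fintype.card A) := by
  classical
  induction V using Finset.induction_on with
  | empty =>
    have h1 := HH_mono (ν := ν) hm f hf (show T ∪ ∅ ⊆ T by simp)
    simpa using h1
  | @insert i V hi ih =>
    rw [Finset.union_insert]
    have h1 := HH_insert_le (ν := ν) hm f hf i (T ∪ V)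
    rw [Finset.card_insert_of_notMem hi]
    push_cast
    linarith

lemma HH_shearer {κ : Type*} (I : Finset κ) (k : ℕ) :
    ∀ (U : Finset ι) (S : κ → Finset ι), (∀ g ∈ I, S g ⊆ U) →
      (∀ x ∈ U, k ≤ (I.filter (fun g => x ∈ S g)).card) →
      (k : ℝ) * condEnt ν m (jn f U) ≤ ∑ g ∈ I, condEnt ν m (jn f (S g)) := by
  classical
  intro U
  induction U using Finset.induction_on with
  | empty =>
    intro S _ _
    rw [HH_empty (ν := ν) hm f]
    rw [mul_zero]
    exact Finset.sum_nonneg (fun g _ => HH_nonneg hm f hf (S g))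
  | @insert x U' hx ih =>
    intro S hsub hcov
    set S' : κ → Finset ι := fun g => (S g).erase x with hS'_def
    have hsub' : ∀ g ∈ I, S' g ⊆ U' := by
      intro g hg y hy
      have h1 := Finset.mem_erase.1 hy
      rcases Finset.mem_insert.1 (hsub g hg h1.2) with h | h
      · exact absurd h h1.1
      · exact h
    have hcov' : ∀ y ∈ U', k ≤ (I.filter (fun g => y ∈ S' g)).card := by
      intro y hy
      have hyx : y ≠ x := fun e => hx (e ▸ hy)
      have heq : I.filter (fun g => y ∈ S' g) = I.filter (fun g => y ∈ S g) := by
        refine Finset.filter_congr (fun g _ => ?_)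
        simp [hS'_def, Finset.mem_erase, hyx]
      rw [heq]
      exact hcov y (Finset.mem_insert_of_mem hy)
    have ih' := ih S' hsub' hcov'
    set Δ : ℝ := condEnt ν m (jn f (insert x U')) - condEnt ν m (jn f U') with hΔ_def
    have hΔ0 : 0 ≤ Δ := by
      have := HH_mono (ν := ν) hm f hf (Finset.subset_insert x U')
      rw [hΔ_def]
      linarith
    have hper : ∀ g ∈ I,
        condEnt ν m (jn f (S' g)) + (if x ∈ S g then Δ else 0)
          ≤ condEnt ν m (jn f (S g)) := by
      intro g hg
      by_cases hgS : x ∈ S g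
      · simp only [hgS, if_true]
        have sub := HH_submod (ν := ν) hm f hf (hsub' g hg) hx (i := x)
        rw [Finset.insert_erase hgS] at sub
        rw [hΔ_def]
        linarith
      · simp only [hgS, if_false, add_zero]
        have heq : S' g = S g := by
          rw [hS'_def]
          exact Finset.erase_eq_of_notMem hgS
        rw [heq]
    have hsum : ∑ g ∈ I, (condEnt ν m (jn f (S' g)) + (if x ∈ S g then Δ else 0))
        ≤ ∑ g ∈ I, condEnt ν m (jn f (S g)) := Finset.sum_le_sum hper
    rw [Finset.sum_add_distrib] at hsum
    have hite : ∑ g ∈ I, (if x ∈ S g then Δ else 0)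
        = ((I.filter (fun g => x ∈ S g)).card : ℝ) * Δ := by
      rw [Finset.sum_ite, Finset.sum_const, Finset.sum_const_zero, add_zero,
        nsmul_eq_mul]
    rw [hite] at hsum
    have hcnt : (k : ℝ) ≤ ((I.filter (fun g => x ∈ S g)).card : ℝ) := by
      exact_mod_cast hcov x (Finset.mem_insert_self x U')
    have hkd : (k : ℝ) * Δ ≤ ((I.filter (fun g => x ∈ S g)).card : ℝ) * Δ :=
      mul_le_mul_of_nonneg_right hcnt hΔ0
    have : (k : ℝ) * condEnt ν m (jn f (insert x U'))
        = (k : ℝ) * condEnt ν m (jn f U') + (k : ℝ) * Δ := by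
      rw [hΔ_def]; ring
    linarith

end Join

end Stmt9Aux

/-- for a group `G` acting by invertible measurable (not necessarily
measure-preserving) transformations on a probability space `(Y, mY, ν)`, a
sub-σ-algebra `m ≤ mY`, a finite measurable partition `α` (with `|α| = card A`
atoms), and nonempty finite `E, F ⊆ G`:
`H_ν(α_F|m) ≤ ∑_{g∈F} |E|⁻¹ H_ν(α_{Eg}|m) + |F \ {g : E⁻¹g ⊆ F}| · log |α|`. -/
theorem stmt9 {Y G : Type*} [Group G] [DecidableEq G] [MulAction G Y]
    (m : MeasurableSpace Y) [mY : MeasurableSpace Y] (hm : m ≤ mY)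
    (ν : Measure Y) [IsProbabilityMeasure ν]
    (hact : ∀ g : G, Measurable fun y : Y => g • y)
    {A : Type*} [Fintype A] [MeasurableSpace A] [MeasurableSingletonClass A]
    (α : Y → A) (hα : Measurable α)
    (E F : Finset G) (hE : E.Nonempty) (hF : F.Nonempty) :
    condEnt ν m (joinMap α F) ≤
      (∑ g ∈ F, ((E.card : ℝ))⁻¹ * condEnt ν m (joinMap α (E.image (fun x => x * g))))
        + ((F.filter fun g => ¬ ∀ e ∈ E, e⁻¹ * g ∈ F).card : ℝ)
            * Real.log (Fintype.card A) := by
  have hY : Nonempty Y := by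
    by_contra hY
    rw [not_nonempty_iff] at hY
    have h1 : ν Set.univ = 1 := measure_univ
    rw [Set.univ_eq_empty_iff.2 hY, measure_empty] at h1
    exact zero_ne_one h1
  haveI := hY
  haveI : Nonempty A := ⟨α (Classical.arbitrary Y)⟩
  set fam : G → Y → A := fun g y => α (g • y) with hfam_def
  have hfam : ∀ g a, MeasurableSet (fam g ⁻¹' {a}) := fun g a =>
    (hα.comp (hact g)) (measurableSet_singleton a)
  have hjm : ∀ S : Finset G, condEnt ν m (joinMap α S) = condEnt ν m (Stmt9Aux.jn fam S) :=
    fun S => rfl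
  set F' : Finset G := F.filter (fun g => ∀ e ∈ E, e⁻¹ * g ∈ F) with hF'_def
  -- Step 1: throw away the bad part of F
  have hsplit : F' ∪ (F \ F') = F := Finset.union_sdiff_of_subset (Finset.filter_subset _ _)
  have e1 : condEnt ν m (joinMap α F) = condEnt ν m (Stmt9Aux.jn fam (F' ∪ (F \ F'))) := by
    rw [hsplit]
    exact hjm F
  have step1 : condEnt ν m (joinMap α F) ≤ condEnt ν m (Stmt9Aux.jn fam F')
      + (((F \ F').card : ℝ)) * Real.log (Fintype.card A) := by
    rw [e1]
    exact Stmt9Aux.HH_union_le hm fam hfam F' (F \ F')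
  -- Step 2: Shearer
  have step2 : ((E.card : ℝ)) * condEnt ν m (Stmt9Aux.jn fam F')
      ≤ ∑ g ∈ F, condEnt ν m (Stmt9Aux.jn fam ((E.image (fun x => x * g)) ∩ F')) := by
    refine Stmt9Aux.HH_shearer hm fam hfam F E.card F'
      (fun g => (E.image (fun x => x * g)) ∩ F') (fun g _ => Finset.inter_subset_right) ?_
    intro x hx
    rw [hF'_def] at hx
    have hxF : x ∈ F := (Finset.mem_filter.1 hx).1
    have hxP : ∀ e ∈ E, e⁻¹ * x ∈ F := (Finset.mem_filter.1 hx).2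
    refine Finset.card_le_card_of_injOn (fun e => e⁻¹ * x) ?_ ?_
    · intro e he
      refine Finset.mem_filter.2 ⟨hxP e he, ?_⟩
      refine Finset.mem_inter.2 ⟨?_, by rw [← hF'_def] at hx; exact hx⟩
      exact Finset.mem_image.2 ⟨e, he, by group⟩
    · intro e1 h1 e2 h2 hee
      have : e1⁻¹ * x = e2⁻¹ * x := hee
      have h3 : e1⁻¹ = e2⁻¹ := mul_right_cancel this
      exact inv_injective h3
  have step3 : ∑ g ∈ F, condEnt ν m (Stmt9Aux.jn fam ((E.image (fun x => x * g)) ∩ F'))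
      ≤ ∑ g ∈ F, condEnt ν m (Stmt9Aux.jn fam (E.image (fun x => x * g))) :=
    Finset.sum_le_sum (fun g _ =>
      Stmt9Aux.HH_mono (ν := ν) hm fam hfam Finset.inter_subset_left)
  have hEpos : (0:ℝ) < (E.card : ℝ) := by exact_mod_cast Finset.card_pos.2 hE
  have hfinal : condEnt ν m (Stmt9Aux.jn fam F')
      ≤ ∑ g ∈ F, ((E.card : ℝ))⁻¹ * condEnt ν m (joinMap α (E.image (fun x => x * g))) := by
    have hsum_eq : ∑ g ∈ F, ((E.card : ℝ))⁻¹ * condEnt ν m (joinMap α (E.image (fun x => x * g)))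
        = ((E.card : ℝ))⁻¹
          * ∑ g ∈ F, condEnt ν m (Stmt9Aux.jn fam (E.image (fun x => x * g))) := by
      rw [← Finset.mul_sum]
      congr 1
    rw [hsum_eq, inv_mul_eq_div, le_div_iff₀ hEpos, mul_comm]
    exact step2.trans step3
  have hcard : (F.filter fun g => ¬ ∀ e ∈ E, e⁻¹ * g ∈ F) = F \ F' := by
    rw [hF'_def, Finset.filter_not]
  rw [hcard]
  have hlog : 0 ≤ Real.log (Fintype.card A) := by
    refine Real.log_nonneg ?_
    exact_mod_cast Fintype.card_pos
  have := add_le_add_right hfinal (((F \ F').card : ℝ) * Real.log (Fintype.card A))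
  linarith
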